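/- arXiv:1812.01137 — 2 statements merged into one kernel-verified Lean document; each statement's English description precedes it below -/
import Mathlib

section
/- The expected one-step increase in confidence under Bayes updating equals the reward: ∑_y p_1^u(y) (C_1(F(ρ,u,y)) − C_1(ρ)) = ∑_y p_1^u(y) log( p_1^u(y) / ∑_{j≠1} 𝜌̃_j p_j^u(y) ), where 𝜌̃_j = ρ_j/(1−ρ_1). -/
/-- Bayes update of a belief `ρ` with likelihoods `p · y` at observation `y`. -/
noncomputable def bayesUpdate {H Y : Type*} [Fintype H]
    (ρ : H → ℝ) (p : H → Y → ℝ) (y : Y) : H → ℝ :=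
  fun h => ρ h * p h y / ∑ h', ρ h' * p h' y

/-- Under Bayes updating, the expected one-step increase in the confidence level
`C_1(ρ) = log (ρ_1/(1−ρ_1))` equals the reward
`r(ρ,u) = ∑_y p_1^u(y) log ( p_1^u(y) / ∑_{j≠1} ρ̃_j p_j^u(y) )` with
`ρ̃_j = ρ_j/(1−ρ_1)`. -/
theorem expected_confidence_increase_eq_reward {H Y : Type*}
    [Fintype H] [Fintype Y] [DecidableEq H]
    (h1 : H) (ρ : H → ℝ) (hρ0 : ∀ h, 0 ≤ ρ h) (hρ1 : ∑ h, ρ h = 1)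
    (hpos : 0 < ρ h1) (hlt : ρ h1 < 1)
    (p : H → Y → ℝ) (hppos : ∀ h y, 0 < p h y) (hpsum : ∀ h, ∑ y, p h y = 1) :
    ∑ y, p h1 y *
        (Real.log (bayesUpdate ρ p y h1 / (1 - bayesUpdate ρ p y h1)) -
          Real.log (ρ h1 / (1 - ρ h1)))
      = ∑ y, p h1 y *
          Real.log (p h1 y /
            ∑ j ∈ Finset.univ.erase h1, (ρ j / (1 - ρ h1)) * p j y) := by
  have h1lt : (0:ℝ) < 1 - ρ h1 := by linarith
  have hrest : ∑ j ∈ Finset.univ.erase h1, ρ j = 1 - ρ h1 := by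
    have := Finset.add_sum_erase Finset.univ ρ (Finset.mem_univ h1)
    rw [hρ1] at this; linarith
  obtain ⟨j, hj, hjpos⟩ : ∃ j ∈ Finset.univ.erase h1, 0 < ρ j := by
    by_contra hc
    push_neg at hc
    have : ∑ j ∈ Finset.univ.erase h1, ρ j ≤ 0 :=
      Finset.sum_nonpos hc
    linarith
  apply Finset.sum_congr rfl
  intro y _
  congr 1
  set A := ρ h1 * p h1 y with hA
  set B := ∑ j ∈ Finset.univ.erase h1, ρ j * p j y with hB
  have hApos : 0 < A := mul_pos hpos (hppos h1 y)
  have hBpos : 0 < B :=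
    Finset.sum_pos' (fun i _ => mul_nonneg (hρ0 i) (hppos i y).le)
      ⟨j, hj, mul_pos hjpos (hppos j y)⟩
  have hZ : ∑ h', ρ h' * p h' y = A + B :=
    (Finset.add_sum_erase Finset.univ (fun h => ρ h * p h y) (Finset.mem_univ h1)).symm
  have hZpos : 0 < A + B := by linarith
  have hb : bayesUpdate ρ p y h1 = A / (A + B) := by
    simp only [bayesUpdate, hZ, hA]
  have h1b : 1 - bayesUpdate ρ p y h1 = B / (A + B) := by
    rw [hb]; field_simp; ring
  have hS : ∑ j ∈ Finset.univ.erase h1, (ρ j / (1 - ρ h1)) * p j y = B / (1 - ρ h1) := by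
    rw [hB, Finset.sum_div]
    exact Finset.sum_congr rfl fun i _ => by ring
  rw [h1b, hb, hS]
  have hfrac : A / (A + B) / (B / (A + B)) = A / B := by
    field_simp
  rw [hfrac, hA,
    Real.log_div (ne_of_gt (mul_pos hpos (hppos h1 y))) (ne_of_gt hBpos),
    Real.log_mul (ne_of_gt hpos) (ne_of_gt (hppos h1 y)),
    Real.log_div (ne_of_gt hpos) (ne_of_gt h1lt),
    Real.log_div (ne_of_gt (hppos h1 y)) (ne_of_gt (div_pos hBpos h1lt)),
    Real.log_div (ne_of_gt hBpos) (ne_of_gt h1lt)]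
  ring
end

section
/- Fixed point verification: let β* ∈ Δ(H̃) achieve the minimax value R* = max_u ∑_{j∈H̃} β*_j D(p_1^u ‖ p_j^u). Define w(ρ) = −∑_{j≠1} β*_j log(ρ_j/(1−ρ_1)). Then for every ρ ∈ Δ(H) with all coordinates positive, max_u { r(ρ,u) + ∑_y p_1^u(y) w(F(ρ,u,y)) } = R* + w(ρ), where r(ρ,u) = ∑_y p_1^u(y) log(p_1^u(y)/∑_{j≠1} (ρ_j/(1−ρ_1)) p_j^u(y)) and F is the Bayes update under hypothesis-1 likelihoods. -/
open Finset in
/-- Fixed point verification (Lemma 2 of the paper): let `β* ∈ Δ(H̃)` be a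
minimizer of `β ↦ max_u ∑_{j≠1} β_j D(p_1^u ‖ p_j^u)` with minimax value
`R* = max_u ∑_{j≠1} β*_j D(p_1^u ‖ p_j^u)`.  With
`w(ρ) = −∑_{j≠1} β*_j log (ρ_j/(1−ρ_1))`,
`r(ρ,u) = ∑_y p_1^u(y) log (p_1^u(y)/∑_{j≠1} (ρ_j/(1−ρ_1)) p_j^u(y))` and `F` the
Bayes update under hypothesis-1 likelihoods, every strictly positive `ρ ∈ Δ(H)`
satisfies `max_u { r(ρ,u) + ∑_y p_1^u(y) w(F(ρ,u,y)) } = R* + w(ρ)`. -/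
theorem fixed_point_verification {H U Y : Type*}
    [Fintype H] [Fintype U] [Fintype Y] [DecidableEq H] [Nonempty U]
    (h1 : H)
    (p : H → U → Y → ℝ) (hppos : ∀ h u y, 0 < p h u y)
    (hpsum : ∀ h u, ∑ y, p h u y = 1)
    (β : H → ℝ) (hβ0 : ∀ j, 0 ≤ β j) (hβh1 : β h1 = 0)
    (hβ1 : ∑ j ∈ univ.erase h1, β j = 1)
    (R : ℝ)
    (hR : R = univ.sup' univ_nonempty (fun u =>
      ∑ j ∈ univ.erase h1, β j * ∑ y, p h1 u y * Real.log (p h1 u y / p j u y)))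
    (hmin : ∀ β' : H → ℝ, (∀ j, 0 ≤ β' j) → β' h1 = 0 →
      (∑ j ∈ univ.erase h1, β' j = 1) →
      R ≤ univ.sup' univ_nonempty (fun u =>
        ∑ j ∈ univ.erase h1, β' j * ∑ y, p h1 u y * Real.log (p h1 u y / p j u y)))
    (ρ : H → ℝ) (hρpos : ∀ h, 0 < ρ h) (hρ1 : ∑ h, ρ h = 1) (hρlt : ρ h1 < 1) :
    univ.sup' univ_nonempty (fun u =>
        (∑ y, p h1 u y *
          Real.log (p h1 u y / ∑ j ∈ univ.erase h1, (ρ j / (1 - ρ h1)) * p j u y)) +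
        ∑ y, p h1 u y *
          (-(∑ j ∈ univ.erase h1, β j *
            Real.log ((ρ j * p j u y / ∑ h', ρ h' * p h' u y) /
              (1 - ρ h1 * p h1 u y / ∑ h', ρ h' * p h' u y)))))
      = R + (-(∑ j ∈ univ.erase h1, β j * Real.log (ρ j / (1 - ρ h1)))) := by
  classical
  set W : ℝ := -(∑ j ∈ univ.erase h1, β j * Real.log (ρ j / (1 - ρ h1))) with hW
  have hρ1pos : 0 < 1 - ρ h1 := by linarith
  have key : ∀ u : U,
      ((∑ y, p h1 u y *
          Real.log (p h1 u y / ∑ j ∈ univ.erase h1, (ρ j / (1 - ρ h1)) * p j u y)) +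
        ∑ y, p h1 u y *
          (-(∑ j ∈ univ.erase h1, β j *
            Real.log ((ρ j * p j u y / ∑ h', ρ h' * p h' u y) /
              (1 - ρ h1 * p h1 u y / ∑ h', ρ h' * p h' u y)))))
      = (∑ j ∈ univ.erase h1, β j * ∑ y, p h1 u y * Real.log (p h1 u y / p j u y)) + W := by
    intro u
    have hT : ∀ y, 0 < ∑ j ∈ univ.erase h1, ρ j * p j u y := by
      intro y
      obtain ⟨j, hj⟩ := (univ.erase h1).nonempty_of_sum_ne_zero (by rw [hβ1]; norm_num)
      exact Finset.sum_pos' (fun i _ => le_of_lt (mul_pos (hρpos i) (hppos i u y)))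
        ⟨j, hj, mul_pos (hρpos j) (hppos j u y)⟩
    have hS : ∀ y, (∑ h', ρ h' * p h' u y)
        = ρ h1 * p h1 u y + ∑ j ∈ univ.erase h1, ρ j * p j u y :=
      fun y => (Finset.add_sum_erase univ (fun h' => ρ h' * p h' u y) (mem_univ h1)).symm
    have hSpos : ∀ y, 0 < ∑ h', ρ h' * p h' u y := by
      intro y; rw [hS y]
      exact add_pos (mul_pos (hρpos h1) (hppos h1 u y)) (hT y)
    -- simplify the Bayes-update ratio
    have hratio : ∀ (j : H) (y : Y),
        (ρ j * p j u y / ∑ h', ρ h' * p h' u y) /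
          (1 - ρ h1 * p h1 u y / ∑ h', ρ h' * p h' u y)
        = ρ j * p j u y / ∑ k ∈ univ.erase h1, ρ k * p k u y := by
      intro j y
      have h1' : (1 : ℝ) - ρ h1 * p h1 u y / ∑ h', ρ h' * p h' u y
          = (∑ k ∈ univ.erase h1, ρ k * p k u y) / ∑ h', ρ h' * p h' u y := by
        rw [eq_div_iff (hSpos y).ne', sub_mul, div_mul_cancel₀ _ (hSpos y).ne', one_mul,
          hS y]; ring
      rw [h1']
      rw [div_div_div_eq, mul_comm (ρ j * p j u y), mul_div_mul_left _ _ (hSpos y).ne']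
    have hr : ∀ y, (∑ j ∈ univ.erase h1, (ρ j / (1 - ρ h1)) * p j u y)
        = (∑ j ∈ univ.erase h1, ρ j * p j u y) / (1 - ρ h1) := by
      intro y; rw [Finset.sum_div]; exact Finset.sum_congr rfl fun j _ => by ring
    -- rewrite each side into the canonical form
    have hL : ∀ y, p h1 u y *
          Real.log (p h1 u y / ∑ j ∈ univ.erase h1, (ρ j / (1 - ρ h1)) * p j u y) +
        p h1 u y *
          (-(∑ j ∈ univ.erase h1, β j *
            Real.log ((ρ j * p j u y / ∑ h', ρ h' * p h' u y) /
              (1 - ρ h1 * p h1 u y / ∑ h', ρ h' * p h' u y))))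
        = p h1 u y * (Real.log (p h1 u y) + Real.log (1 - ρ h1)
            - (∑ j ∈ univ.erase h1, β j * Real.log (ρ j))
            - ∑ j ∈ univ.erase h1, β j * Real.log (p j u y)) := by
      intro y
      have e1 : Real.log (p h1 u y / ∑ j ∈ univ.erase h1, (ρ j / (1 - ρ h1)) * p j u y)
          = Real.log (p h1 u y) + Real.log (1 - ρ h1)
            - Real.log (∑ j ∈ univ.erase h1, ρ j * p j u y) := by
        rw [hr y, Real.log_div (hppos h1 u y).ne' (div_pos (hT y) hρ1pos).ne',
          Real.log_div (hT y).ne' hρ1pos.ne']; ring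
      have e2 : ∀ j ∈ univ.erase h1, β j *
          Real.log ((ρ j * p j u y / ∑ h', ρ h' * p h' u y) /
            (1 - ρ h1 * p h1 u y / ∑ h', ρ h' * p h' u y))
          = β j * (Real.log (ρ j) + Real.log (p j u y)
              - Real.log (∑ k ∈ univ.erase h1, ρ k * p k u y)) := by
        intro j _
        rw [hratio j y, Real.log_div (mul_pos (hρpos j) (hppos j u y)).ne' (hT y).ne',
          Real.log_mul (hρpos j).ne' (hppos j u y).ne']
      rw [e1, Finset.sum_congr rfl e2]
      have : ∑ j ∈ univ.erase h1, β j * (Real.log (ρ j) + Real.log (p j u y)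
              - Real.log (∑ k ∈ univ.erase h1, ρ k * p k u y))
          = (∑ j ∈ univ.erase h1, β j * Real.log (ρ j))
            + (∑ j ∈ univ.erase h1, β j * Real.log (p j u y))
            - Real.log (∑ k ∈ univ.erase h1, ρ k * p k u y) := by
        calc ∑ j ∈ univ.erase h1, β j * (Real.log (ρ j) + Real.log (p j u y)
                - Real.log (∑ k ∈ univ.erase h1, ρ k * p k u y))
            = ∑ j ∈ univ.erase h1, (β j * Real.log (ρ j) + β j * Real.log (p j u y)
                - β j * Real.log (∑ k ∈ univ.erase h1, ρ k * p k u y)) :=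
              Finset.sum_congr rfl fun j _ => by ring
          _ = (∑ j ∈ univ.erase h1, β j * Real.log (ρ j))
              + (∑ j ∈ univ.erase h1, β j * Real.log (p j u y))
              - ∑ j ∈ univ.erase h1, β j * Real.log (∑ k ∈ univ.erase h1, ρ k * p k u y) := by
              rw [Finset.sum_sub_distrib, Finset.sum_add_distrib]
          _ = _ := by rw [← Finset.sum_mul, hβ1, one_mul]
      rw [this]; ring
    rw [← Finset.sum_add_distrib, Finset.sum_congr rfl fun y _ => hL y]
    -- now compute the RHS
    have hRHS : (∑ j ∈ univ.erase h1, β j * ∑ y, p h1 u y * Real.log (p h1 u y / p j u y)) + W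
        = ∑ y, p h1 u y * (Real.log (p h1 u y) + Real.log (1 - ρ h1)
            - (∑ j ∈ univ.erase h1, β j * Real.log (ρ j))
            - ∑ j ∈ univ.erase h1, β j * Real.log (p j u y)) := by
      have hWs : W = Real.log (1 - ρ h1) - ∑ j ∈ univ.erase h1, β j * Real.log (ρ j) := by
        rw [hW, Finset.sum_congr rfl fun j _ => by
          rw [Real.log_div (hρpos j).ne' hρ1pos.ne']]
        rw [Finset.sum_congr rfl (fun j _ => (mul_sub (β j) _ _ : _)),
          Finset.sum_sub_distrib, ← Finset.sum_mul, hβ1, one_mul]; ring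
      have hD : (∑ j ∈ univ.erase h1, β j * ∑ y, p h1 u y * Real.log (p h1 u y / p j u y))
          = ∑ y, p h1 u y * (Real.log (p h1 u y)
              - ∑ j ∈ univ.erase h1, β j * Real.log (p j u y)) := by
        rw [Finset.sum_congr rfl fun j _ => Finset.mul_sum (univ) _ (β j), Finset.sum_comm]
        refine Finset.sum_congr rfl fun y _ => ?_
        rw [Finset.sum_congr rfl fun j _ => by
          rw [Real.log_div (hppos h1 u y).ne' (hppos j u y).ne']]
        calc ∑ j ∈ univ.erase h1,
              β j * (p h1 u y * (Real.log (p h1 u y) - Real.log (p j u y)))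
            = (∑ j ∈ univ.erase h1, β j) * (p h1 u y * Real.log (p h1 u y))
              - p h1 u y * ∑ j ∈ univ.erase h1, β j * Real.log (p j u y) := by
              rw [Finset.sum_mul, Finset.mul_sum, ← Finset.sum_sub_distrib]
              exact Finset.sum_congr rfl fun j _ => by ring
          _ = _ := by rw [hβ1]; ring
      rw [hD, hWs, show Real.log (1 - ρ h1) - ∑ j ∈ univ.erase h1, β j * Real.log (ρ j)
          = ∑ y, p h1 u y * (Real.log (1 - ρ h1)
              - ∑ j ∈ univ.erase h1, β j * Real.log (ρ j)) by
        rw [← Finset.sum_mul, hpsum h1 u, one_mul]]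
      rw [← Finset.sum_add_distrib]
      exact Finset.sum_congr rfl fun y _ => by ring
    exact hRHS.symm
  calc univ.sup' univ_nonempty _
      = univ.sup' univ_nonempty (fun u =>
          (∑ j ∈ univ.erase h1, β j * ∑ y, p h1 u y * Real.log (p h1 u y / p j u y)) + W) := by
        apply Finset.sup'_congr _ rfl
        intro u _; exact key u
    _ = R + W := by
        rw [← Finset.sup'_add, ← hR]
end
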